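/- Let n and s be positive integers with 1 ≤ s < n, and consider the unbalanced problem with k = 2s. The diagonal family { (A, A) : A ⊆ Fin n, |A| = s } consists of C(n, s) feasible solutions (each has |A| + |A| = 2s = k vertices), and any two distinct members are adjacent in the nonnegative cone decomposition: for distinct A, A' the weight function c with c i j = 1 if (i ∈ A and j ∈ A) or (i ∈ A' and j ∈ A') and c i j = 0 otherwise is nonnegative, gives both solutions weight s², and gives every other feasible solution weight strictly less than s². Hence the clique number of the graph of the nonnegative cone decomposition K^max_{n,k} is at least C(n, s). -/
import Mathlib


open Finset

/-- The weight of the biclique with parts `U`, `V` under the edge-weight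
function `c` on the complete bipartite graph `K_{n,n}`. -/
noncomputable def weight {n : ℕ} (c : Fin n → Fin n → ℝ) (U V : Finset (Fin n)) : ℝ :=
  ∑ i ∈ U, ∑ j ∈ V, c i j

/-- The diagonal family `{(A, A) : A ⊆ Fin n, |A| = s}`. -/
def diagFamily (n s : ℕ) : Finset (Finset (Fin n) × Finset (Fin n)) :=
  (Finset.powersetCard s (Finset.univ : Finset (Fin n))).image (fun A => (A, A))

private lemma cardIU {α : Type*} [DecidableEq α] (W S T : Finset α) (h : Disjoint S T) :
    (W ∩ (S ∪ T)).card = (W ∩ S).card + (W ∩ T).card := by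
  rw [inter_union_distrib_left,
    card_union_of_disjoint (h.mono inter_subset_right inter_subset_right)]

private lemma inter_full {α : Type*} [DecidableEq α] (W S : Finset α)
    (h : S.card ≤ (W ∩ S).card) : S ⊆ W := by
  have he : W ∩ S = S := eq_of_subset_of_card_le inter_subset_right h
  intro x hx
  exact (mem_inter.mp (by rw [he]; exact hx : x ∈ W ∩ S)).1

private lemma key_cases (s m p q t u a a' b b' : ℕ) (hs : 1 ≤ s) (hm : m < s)
    (h3 : p + q = 2*s) (htm : t ≤ m) (hum : u ≤ m)
    (ham : a + m ≤ s) (ha'm : a' + m ≤ s) (hbm : b + m ≤ s) (hb'm : b' + m ≤ s)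
    (h1 : a + t + a' ≤ p) (h2 : b + u + b' ≤ q)
    (heq : s^2 + t*u ≤ (a+t)*(b+u) + (a'+t)*(b'+u)) :
    (t = m ∧ u = m ∧ a + m = s ∧ b + m = s ∧ a' = 0 ∧ b' = 0 ∧ p = s ∧ q = s) ∨
    (t = m ∧ u = m ∧ a' + m = s ∧ b' + m = s ∧ a = 0 ∧ b = 0 ∧ p = s ∧ q = s) := by
  have h6 : (a+t)*(b+u) + (a'+t)*(b'+u) + (a*b' + a'*b) = (a+t+a')*(b+u+b') + t*u := by ring
  have h5 : (a+t+a')*(b+u+b') ≤ p*q := Nat.mul_le_mul (by omega) (by omega)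
  have hsq : ∃ d : ℕ, p*q + d*d = s^2 := by
    rcases le_total p s with h|h
    · obtain ⟨d, hd⟩ := Nat.exists_eq_add_of_le h
      refine ⟨d, ?_⟩
      have hq : q = p + 2*d := by omega
      have e1 : p*q = p*p + 2*(p*d) := by rw [hq]; ring
      have e2 : s^2 = p*p + 2*(p*d) + d*d := by rw [hd]; ring
      omega
    · obtain ⟨d, hd⟩ := Nat.exists_eq_add_of_le h
      refine ⟨d, ?_⟩
      have hp' : p = q + 2*d := by omega
      have hs' : s = q + d := by omega
      have e1 : p*q = q*q + 2*(q*d) := by rw [hp']; ring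
      have e2 : s^2 = q*q + 2*(q*d) + d*d := by rw [hs']; ring
      omega
  obtain ⟨d, hdd⟩ := hsq
  have hpq : p*q ≤ s^2 := by omega
  have hc0 : a*b' + a'*b = 0 := by linarith [Nat.zero_le (a*b' + a'*b)]
  have hY : (a+t+a')*(b+u+b') = s^2 := by linarith [Nat.zero_le (t*u)]
  have hPQ : p*q = s^2 := by linarith [Nat.zero_le (t*u)]
  have hd0 : d = 0 := mul_self_eq_zero.mp (by omega)
  have hp : p = s := by
    subst hd0
    simp only [Nat.mul_zero, Nat.add_zero] at hdd
    rcases le_total p s with h|h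
    · obtain ⟨e, he⟩ := Nat.exists_eq_add_of_le h
      have hq : q = p + 2*e := by omega
      have e1 : p*q = p*p + 2*(p*e) := by rw [hq]; ring
      have e2 : s^2 = p*p + 2*(p*e) + e*e := by rw [he]; ring
      have : e = 0 := mul_self_eq_zero.mp (by omega)
      omega
    · obtain ⟨e, he⟩ := Nat.exists_eq_add_of_le h
      have hp' : p = q + 2*e := by omega
      have hs' : s = q + e := by omega
      have e1 : p*q = q*q + 2*(q*e) := by rw [hp']; ring
      have e2 : s^2 = q*q + 2*(q*e) + e*e := by rw [hs']; ring
      have : e = 0 := mul_self_eq_zero.mp (by omega)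
      omega
  have hq : q = s := by omega
  have hx : a + t + a' = s := by
    have hxle : a + t + a' ≤ s := by omega
    have hyle : b + u + b' ≤ s := by omega
    have h7 : s * s ≤ (a+t+a') * s := by
      calc s * s = (a+t+a')*(b+u+b') := by rw [hY]; ring
        _ ≤ (a+t+a') * s := Nat.mul_le_mul_left _ hyle
    have := Nat.le_of_mul_le_mul_right (by linarith [h7] : s * s ≤ (a+t+a') * s) (by omega : 0 < s)
    omega
  have hy : b + u + b' = s := by
    have hyle : b + u + b' ≤ s := by omega
    have h7 : s * s ≤ (b+u+b') * s := by
      calc s * s = (a+t+a')*(b+u+b') := by rw [hY]; ring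
        _ = (b+u+b') * (a+t+a') := by ring
        _ ≤ (b+u+b') * s := Nat.mul_le_mul_left _ (by omega)
    have := Nat.le_of_mul_le_mul_right h7 (by omega : 0 < s)
    omega
  have hab : a * b' = 0 := by omega
  have ha'b : a' * b = 0 := by omega
  rcases Nat.mul_eq_zero.mp hab with h|h <;> rcases Nat.mul_eq_zero.mp ha'b with h'|h' <;> omega

private lemma weight_formula {n : ℕ} (A A' : Finset (Fin n)) (c : Fin n → Fin n → ℝ)
    (hc : ∀ i j, c i j = if (i ∈ A ∧ j ∈ A) ∨ (i ∈ A' ∧ j ∈ A') then 1 else 0)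
    (U V : Finset (Fin n)) :
    ∑ i ∈ U, ∑ j ∈ V, c i j
      = ((U ∩ A).card : ℝ) * ((V ∩ A).card : ℝ)
        + ((U ∩ A').card : ℝ) * ((V ∩ A').card : ℝ)
        - ((U ∩ (A ∩ A')).card : ℝ) * ((V ∩ (A ∩ A')).card : ℝ) := by
  have hker : ∀ i j, c i j =
      (if i ∈ A then (1:ℝ) else 0) * (if j ∈ A then (1:ℝ) else 0)
      + (if i ∈ A' then (1:ℝ) else 0) * (if j ∈ A' then (1:ℝ) else 0)
      - (if i ∈ A ∩ A' then (1:ℝ) else 0) * (if j ∈ A ∩ A' then (1:ℝ) else 0) := by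
    intro i j
    rw [hc]
    simp only [mem_inter]
    by_cases h1 : i ∈ A <;> by_cases h2 : j ∈ A <;> by_cases h3 : i ∈ A' <;> by_cases h4 : j ∈ A' <;>
      simp [h1, h2, h3, h4]
  have hsum : ∀ (S W : Finset (Fin n)), ∑ i ∈ W, (if i ∈ S then (1:ℝ) else 0) = ((W ∩ S).card : ℝ) := by
    intro S W; simp [Finset.sum_ite_mem]
  simp only [hker, Finset.sum_add_distrib, Finset.sum_sub_distrib, ← Finset.mul_sum,
    ← Finset.sum_mul, hsum]


/-- For the unbalanced problem with `k = 2s`, the diagonal family consists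
of `C(n,s)` feasible solutions (each with `s + s = 2s` vertices) which are
pairwise adjacent in the nonnegative cone decomposition `K^max_{n,k}`: for
distinct `A`, `A'`, the 0/1 weight function supported on the edges of the
two bicliques is nonnegative, gives both of them weight `s²`, and gives
every other feasible solution strictly smaller weight. Hence the clique
number of the graph of `K^max_{n,2s}` is at least `C(n,s)`. -/
theorem maxwcbs_clique_number_even (n s : ℕ) (hs : 1 ≤ s) (hsn : s < n) :
    (diagFamily n s).card = n.choose s ∧
    (∀ x ∈ diagFamily n s, x.1.card + x.2.card = 2 * s) ∧
    (∀ A A' : Finset (Fin n), A.card = s → A'.card = s → A ≠ A' →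
      ∀ c : Fin n → Fin n → ℝ,
        (∀ i j, c i j = if (i ∈ A ∧ j ∈ A) ∨ (i ∈ A' ∧ j ∈ A') then 1 else 0) →
        (∀ i j, 0 ≤ c i j) ∧
        weight c A A = (s : ℝ) ^ 2 ∧
        weight c A' A' = (s : ℝ) ^ 2 ∧
        ∀ Uz Vz : Finset (Fin n), Uz.card + Vz.card = 2 * s →
          (Uz, Vz) ≠ (A, A) → (Uz, Vz) ≠ (A', A') →
          weight c Uz Vz < (s : ℝ) ^ 2) := by
  refine ⟨?_, ?_, ?_⟩
  · rw [diagFamily, card_image_of_injective _ (fun x y h => (Prod.ext_iff.mp h).1),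
      card_powersetCard, card_univ, Fintype.card_fin]
  · intro x hx
    simp only [diagFamily, mem_image] at hx
    obtain ⟨A, hA, rfl⟩ := hx
    have := (mem_powersetCard_univ.mp hA)
    simp only []
    omega
  · intro A A' hA hA' hAA' c hc
    have hm_lt : (A ∩ A').card < s := by
      have hle : (A ∩ A').card ≤ s := hA ▸ card_le_card inter_subset_left
      rcases lt_or_eq_of_le hle with h|h
      · exact h
      · exfalso
        have h1 : A ∩ A' = A := eq_of_subset_of_card_le inter_subset_left (by omega)
        have h2 : A ⊆ A' := by rw [← h1]; exact inter_subset_right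
        exact hAA' (eq_of_subset_of_card_le h2 (by omega))
    set m := (A ∩ A').card with hm
    refine ⟨?_, ?_, ?_, ?_⟩
    · intro i j; rw [hc i j]; split <;> norm_num
    · show (∑ i ∈ A, ∑ j ∈ A, c i j) = _
      rw [weight_formula A A' c hc A A, inter_self,
        inter_eq_right.mpr (inter_subset_left : A ∩ A' ⊆ A), hA]
      push_cast
      ring
    · show (∑ i ∈ A', ∑ j ∈ A', c i j) = _
      rw [weight_formula A A' c hc A' A', inter_self,
        inter_eq_right.mpr (inter_subset_right : A ∩ A' ⊆ A'), hA', inter_comm A' A]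
      push_cast
      ring
    · intro Uz Vz hk hne1 hne2
      -- decomposition facts
      have hdecA : ∀ W : Finset (Fin n),
          (W ∩ A).card = (W ∩ (A \ A')).card + (W ∩ (A ∩ A')).card := by
        intro W
        have h := cardIU W (A \ A') (A ∩ A') (disjoint_sdiff_inter A A')
        rwa [sdiff_union_inter] at h
      have hdecA' : ∀ W : Finset (Fin n),
          (W ∩ A').card = (W ∩ (A' \ A)).card + (W ∩ (A ∩ A')).card := by
        intro W
        have h := cardIU W (A' \ A) (A' ∩ A) (disjoint_sdiff_inter A' A)
        rwa [sdiff_union_inter, inter_comm A' A] at h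
      have hdecU : ∀ W : Finset (Fin n),
          (W ∩ A).card + (W ∩ (A' \ A)).card ≤ W.card := by
        intro W
        have h := cardIU W A (A' \ A) disjoint_sdiff
        rw [union_sdiff_self_eq_union] at h
        calc (W ∩ A).card + (W ∩ (A' \ A)).card = (W ∩ (A ∪ A')).card := h.symm
          _ ≤ W.card := card_le_card inter_subset_left
      have hsdA : (A \ A').card + m = s := by
        have := card_sdiff_add_card_inter A A'
        omega
      have hsdA' : (A' \ A).card + m = s := by
        have := card_sdiff_add_card_inter A' A
        rw [inter_comm A' A] at this
        omega
      by_contra hcon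
      push_neg at hcon
      rw [show weight c Uz Vz = ∑ i ∈ Uz, ∑ j ∈ Vz, c i j from rfl,
        weight_formula A A' c hc Uz Vz] at hcon
      have heqN : s^2 + (Uz ∩ (A ∩ A')).card * (Vz ∩ (A ∩ A')).card ≤
          (Uz ∩ A).card * (Vz ∩ A).card + (Uz ∩ A').card * (Vz ∩ A').card := by
        have : (s:ℝ)^2 + ((Uz ∩ (A ∩ A')).card : ℝ) * ((Vz ∩ (A ∩ A')).card : ℝ) ≤
            ((Uz ∩ A).card : ℝ) * ((Vz ∩ A).card : ℝ)
            + ((Uz ∩ A').card : ℝ) * ((Vz ∩ A').card : ℝ) := by linarith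
        exact_mod_cast this
      rw [hdecA Uz, hdecA Vz, hdecA' Uz, hdecA' Vz] at heqN
      have hkey := key_cases s m Uz.card Vz.card
        (Uz ∩ (A ∩ A')).card (Vz ∩ (A ∩ A')).card
        (Uz ∩ (A \ A')).card (Uz ∩ (A' \ A)).card
        (Vz ∩ (A \ A')).card (Vz ∩ (A' \ A)).card
        hs hm_lt (by omega)
        (card_le_card inter_subset_right) (card_le_card inter_subset_right)
        (by have := card_le_card (inter_subset_right : Uz ∩ (A \ A') ⊆ A \ A'); omega)
        (by have := card_le_card (inter_subset_right : Uz ∩ (A' \ A) ⊆ A' \ A); omega)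
        (by have := card_le_card (inter_subset_right : Vz ∩ (A \ A') ⊆ A \ A'); omega)
        (by have := card_le_card (inter_subset_right : Vz ∩ (A' \ A) ⊆ A' \ A); omega)
        (by have h1 := hdecU Uz; have h2 := hdecA Uz; omega)
        (by have h1 := hdecU Vz; have h2 := hdecA Vz; omega)
        heqN
      -- helper to conclude W = A or W = A'
      have hWA : ∀ W : Finset (Fin n), W.card = s → (W ∩ (A ∩ A')).card = m →
          (W ∩ (A \ A')).card + m = s → W = A := by
        intro W hWs ht ha
        have h1 : A ∩ A' ⊆ W := inter_full W (A ∩ A') (by omega)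
        have h2 : A \ A' ⊆ W := inter_full W (A \ A')
          (by have := card_le_card (inter_subset_right : W ∩ (A \ A') ⊆ A \ A'); omega)
        have hsub : A ⊆ W := by
          rw [← sdiff_union_inter A A']
          exact union_subset h2 h1
        exact (eq_of_subset_of_card_le hsub (by omega)).symm
      have hWA' : ∀ W : Finset (Fin n), W.card = s → (W ∩ (A ∩ A')).card = m →
          (W ∩ (A' \ A)).card + m = s → W = A' := by
        intro W hWs ht ha
        have h1 : A ∩ A' ⊆ W := inter_full W (A ∩ A') (by omega)
        have h2 : A' \ A ⊆ W := inter_full W (A' \ A)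
          (by have := card_le_card (inter_subset_right : W ∩ (A' \ A) ⊆ A' \ A); omega)
        have hsub : A' ⊆ W := by
          rw [← sdiff_union_inter A' A, inter_comm A' A]
          exact union_subset h2 h1
        exact (eq_of_subset_of_card_le hsub (by omega)).symm
      rcases hkey with ⟨ht, hu, ha, hb, _, _, hp, hq⟩ | ⟨ht, hu, ha', hb', _, _, hp, hq⟩
      · exact hne1 (by rw [hWA Uz hp ht ha, hWA Vz hq hu hb])
      · exact hne2 (by rw [hWA' Uz hp ht ha', hWA' Vz hq hu hb'])
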